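/- arXiv:math/0612604 — 4 statements merged into one kernel-verified Lean document; each statement's English description precedes it below -/
import Mathlib

section
/- Let E be a Banach space with an sc-structure and K a finite-dimensional subspace of E_∞ = ⋂ₘ Eₘ. Then K splits the sc-space E: there exists a closed subspace Y of E such that, setting Yₘ = Y ∩ Eₘ, one has Eₘ = K ⊕ Yₘ (topological direct sum) for every m ≥ 0, and Y_∞ = ⋂ₘ Yₘ is dense in every Yₘ. -/
variable {E F G : ℕ → Type*}
  [∀ m, NormedAddCommGroup (E m)] [∀ m, NormedSpace ℝ (E m)]
  [∀ m, NormedAddCommGroup (F m)] [∀ m, NormedSpace ℝ (F m)]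
  [∀ m, NormedAddCommGroup (G m)] [∀ m, NormedSpace ℝ (G m)]

/-- The composite inclusion from level `m + k` down to level `m`. -/
def inclAdd (ι : ∀ m, E (m + 1) →L[ℝ] E m) (m : ℕ) : ∀ k, E (m + k) →L[ℝ] E m
  | 0 => ContinuousLinearMap.id ℝ (E m)
  | k + 1 => (inclAdd ι m k).comp (ι (m + k))

/-- The inclusion from level `m` down to level `0`. -/
def down (ι : ∀ m, E (m + 1) →L[ℝ] E m) : ∀ m, E m →L[ℝ] E 0
  | 0 => ContinuousLinearMap.id ℝ (E 0)
  | m + 1 => (down ι m).comp (ι m)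

/-- A point on level `m` is smooth (belongs to `E_∞`) if it lifts to every higher level. -/
def IsSmoothPt (ι : ∀ m, E (m + 1) →L[ℝ] E m) (m : ℕ) (x : E m) : Prop :=
  ∀ k, ∃ y : E (m + k), inclAdd ι m k y = x

/-- An sc-structure: injective compact inclusions with smooth points dense on every level. -/
def ScStructure (ι : ∀ m, E (m + 1) →L[ℝ] E m) : Prop :=
  (∀ m, Function.Injective (ι m)) ∧ (∀ m, IsCompactOperator (ι m)) ∧
    (∀ m, Dense {x : E m | IsSmoothPt ι m x})

/- Auxiliary lemmas -/

lemma down_inclAdd (ι : ∀ m, E (m + 1) →L[ℝ] E m) (m : ℕ) :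
    ∀ k (x : E (m + k)), down ι m (inclAdd ι m k x) = down ι (m + k) x
  | 0, x => rfl
  | k + 1, x => down_inclAdd ι m k (ι (m + k) x)

lemma down_injective {ι : ∀ m, E (m + 1) →L[ℝ] E m}
    (hinj : ∀ m, Function.Injective (ι m)) : ∀ m, Function.Injective (down ι m)
  | 0 => fun _ _ h => h
  | m + 1 => fun x y h => (hinj m) ((down_injective hinj m) h)

lemma down_cast (ι : ∀ m, E (m + 1) →L[ℝ] E m) {a b : ℕ} (h : a = b) (x : E a) :
    down ι b (cast (congrArg E h) x) = down ι a x := by subst h; rfl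

lemma inclAdd_zero_eq (ι : ∀ m, E (m + 1) →L[ℝ] E m) (n : ℕ) (x : E (0 + n)) :
    inclAdd ι 0 n x = down ι (0 + n) x :=
  down_inclAdd ι 0 n x

/-- A smooth point of `E 0` lifts to a smooth point on every level. -/
lemma exists_smooth_lift {ι : ∀ m, E (m + 1) →L[ℝ] E m}
    (hinj : ∀ m, Function.Injective (ι m)) {x : E 0} (hx : IsSmoothPt ι 0 x) (m : ℕ) :
    ∃ z : E m, down ι m z = x ∧ IsSmoothPt ι m z := by
  obtain ⟨y, hy⟩ := hx m
  rw [inclAdd_zero_eq] at hy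
  refine ⟨cast (congrArg E (Nat.zero_add m)) y, ?_, ?_⟩
  · rw [down_cast ι (Nat.zero_add m)]; exact hy
  · intro k
    obtain ⟨w, hw⟩ := hx (m + k)
    rw [inclAdd_zero_eq] at hw
    refine ⟨cast (congrArg E (Nat.zero_add (m + k))) w, ?_⟩
    apply down_injective hinj m
    rw [down_inclAdd, down_cast ι (Nat.zero_add (m + k)), hw,
      down_cast ι (Nat.zero_add m), hy]

/-- The smooth points on level `m` form a submodule. -/
def smoothSubmodule (ι : ∀ m, E (m + 1) →L[ℝ] E m) (m : ℕ) : Submodule ℝ (E m) where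
  carrier := {x | IsSmoothPt ι m x}
  zero_mem' := fun k => ⟨0, map_zero _⟩
  add_mem' := by
    intro a b ha hb k
    obtain ⟨y, hy⟩ := ha k
    obtain ⟨z, hz⟩ := hb k
    exact ⟨y + z, by rw [map_add, hy, hz]⟩
  smul_mem' := by
    intro c a ha k
    obtain ⟨y, hy⟩ := ha k
    exact ⟨c • y, by rw [map_smul, hy]⟩

/- STATEMENT 2: a finite-dimensional subspace K of E_∞ splits the sc-space E:
there is a closed subspace Y such that on every level m, Eₘ = Kₘ ⊕ Yₘ is a
topological direct sum (Kₘ, Yₘ being the parts of K, Y lying on level m), and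
the smooth points of Y are dense in every Yₘ. -/
theorem stmt2 [∀ m, CompleteSpace (E m)]
    (ι : ∀ m, E (m + 1) →L[ℝ] E m) (hsc : ScStructure ι)
    (K : Submodule ℝ (E 0)) (hKfin : FiniteDimensional ℝ K)
    (hKsmooth : ∀ x ∈ K, IsSmoothPt ι 0 x) :
    ∃ Y : Submodule ℝ (E 0), IsClosed (Y : Set (E 0)) ∧
      (∀ m, IsClosed ((Y.comap (down ι m : E m →ₗ[ℝ] E 0) : Submodule ℝ (E m)) : Set (E m))) ∧
      (∀ m, IsCompl (K.comap (down ι m : E m →ₗ[ℝ] E 0))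
          (Y.comap (down ι m : E m →ₗ[ℝ] E 0))) ∧
      (∀ m, ∀ y : E m, down ι m y ∈ Y →
          y ∈ closure {z : E m | down ι m z ∈ Y ∧ IsSmoothPt ι m z}) := by
  classical
  obtain ⟨hinj, -, hdense⟩ := hsc
  -- a basis of K and dual continuous functionals on E 0
  set n := Module.finrank ℝ K with hn
  let b : Module.Basis (Fin n) ℝ K := Module.finBasis ℝ K
  have hcoord : ∀ i : Fin n, ∃ g : E 0 →L[ℝ] ℝ, ∀ x : K, g x = b.coord i x := by
    intro i
    obtain ⟨g, hg, -⟩ := exists_extension_norm_eq K (b.coord i).toContinuousLinearMap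
    exact ⟨g, fun x => by simpa using hg x⟩
  choose g hg using hcoord
  -- the continuous projection P : E 0 → K
  let P : E 0 →L[ℝ] K := ∑ i, (g i).smulRight (b i)
  have hP : ∀ x : K, P (x : E 0) = x := by
    intro x
    have : P (x : E 0) = ∑ i, g i (x : E 0) • b i := by
      simp [P, ContinuousLinearMap.sum_apply]
    rw [this]
    have : ∑ i, g i (x : E 0) • b i = ∑ i, b.repr x i • b i := by
      refine Finset.sum_congr rfl fun i _ => ?_
      rw [hg i x]; rfl
    rw [this, b.sum_repr]
  set Y : Submodule ℝ (E 0) := LinearMap.ker (P : E 0 →ₗ[ℝ] K) with hY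
  have hYmem : ∀ x : E 0, x ∈ Y ↔ P x = 0 := fun x => LinearMap.mem_ker
  have hYclosed : IsClosed (Y : Set (E 0)) := ContinuousLinearMap.isClosed_ker P
  -- smooth lifts of elements of K to each level
  have hliftex : ∀ (m : ℕ) (k : K), ∃ z : E m, down ι m z = (k : E 0) ∧ IsSmoothPt ι m z :=
    fun m k => exists_smooth_lift hinj (hKsmooth k k.2) m
  choose L hL1 hL2 using hliftex
  -- each lift map is linear
  have hLadd : ∀ (m : ℕ) (a c : K), L m (a + c) = L m a + L m c := by
    intro m a c
    apply down_injective hinj m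
    rw [map_add, hL1, hL1, hL1]; rfl
  have hLsmul : ∀ (m : ℕ) (r : ℝ) (a : K), L m (r • a) = r • L m a := by
    intro m r a
    apply down_injective hinj m
    rw [map_smul, hL1, hL1]; rfl
  have hLzero : ∀ m : ℕ, L m 0 = 0 := by
    intro m
    apply down_injective hinj m
    rw [hL1, map_zero]; rfl
  refine ⟨Y, hYclosed, ?_, ?_, ?_⟩
  · -- each Y_m is closed
    intro m
    exact hYclosed.preimage (down ι m).continuous
  · -- IsCompl on each level
    intro m
    constructor
    · rw [Submodule.disjoint_def]
      intro x hxK hxY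
      have h1 : down ι m x ∈ K := hxK
      have h2 : P (down ι m x) = 0 := hxY
      have : P (down ι m x) = ⟨down ι m x, h1⟩ := hP ⟨down ι m x, h1⟩
      have h3 : down ι m x = 0 := by
        have := this.symm.trans h2
        exact congrArg Subtype.val this
      exact down_injective hinj m (by rw [h3, map_zero])
    · rw [codisjoint_iff, eq_top_iff]
      intro x _
      have hk : L m (P (down ι m x)) ∈ K.comap (down ι m : E m →ₗ[ℝ] E 0) := by
        show down ι m (L m (P (down ι m x))) ∈ K
        rw [hL1]; exact (P (down ι m x)).2
      have hy : x - L m (P (down ι m x)) ∈ Y.comap (down ι m : E m →ₗ[ℝ] E 0) := by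
        show down ι m (x - L m (P (down ι m x))) ∈ Y
        rw [hYmem, map_sub, map_sub, hL1, hP]
        simp
      have := Submodule.add_mem_sup hk hy
      simpa using this
  · -- density of smooth points in each Y_m
    intro m y hy
    -- the continuous projection of E m onto Y_m along K_m
    let Llin : K →ₗ[ℝ] E m :=
      { toFun := L m
        map_add' := hLadd m
        map_smul' := hLsmul m }
    let Lc : K →L[ℝ] E m := LinearMap.toContinuousLinearMap Llin
    let π : E m →L[ℝ] E m :=
      ContinuousLinearMap.id ℝ (E m) - Lc.comp (P.comp (down ι m))
    have hπ : ∀ z : E m, π z = z - L m (P (down ι m z)) := fun z => rfl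
    have hπy : π y = y := by
      rw [hπ]
      have : P (down ι m y) = 0 := (hYmem _).1 hy
      rw [this, hLzero, sub_zero]
    have hmem : ∀ z : E m, IsSmoothPt ι m z →
        π z ∈ {w : E m | down ι m w ∈ Y ∧ IsSmoothPt ι m w} := by
      intro z hz
      constructor
      · show down ι m (π z) ∈ Y
        rw [hπ, hYmem, map_sub, map_sub, hL1, hP]
        simp
      · show IsSmoothPt ι m (π z)
        rw [hπ]
        have h1 : z ∈ smoothSubmodule ι m := hz
        have h2 : L m (P (down ι m z)) ∈ smoothSubmodule ι m := hL2 m _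
        exact sub_mem h1 h2
    have hyc : y ∈ closure {x : E m | IsSmoothPt ι m x} := hdense m y
    have := map_mem_closure π.continuous hyc hmem
    rwa [hπy] at this
end

section
/- Let F be a Banach space, F = D ⊕ Y a topological direct sum with D finite-dimensional and Y closed, and let F_∞ ⊆ F be a dense linear subspace. Then there exists a finite-dimensional subspace C ⊆ F_∞ with F = C ⊕ Y. -/
/- STATEMENT 9: if F = D ⊕ Y with D finite-dimensional and Y closed, and F_∞
is a dense subspace of F, then there is a finite-dimensional C ⊆ F_∞ with
F = C ⊕ Y. -/
theorem stmt9 {F : Type*} [NormedAddCommGroup F] [NormedSpace ℝ F] [CompleteSpace F]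
    (D Y : Submodule ℝ F) (hD : FiniteDimensional ℝ D) (hY : IsClosed (Y : Set F))
    (hcompl : IsCompl D Y)
    (Finf : Submodule ℝ F) (hdense : Dense (Finf : Set F)) :
    ∃ C : Submodule ℝ F, FiniteDimensional ℝ C ∧ C ≤ Finf ∧ IsCompl C Y := by
  classical
  have hDc : IsClosed (D : Set F) := D.closed_of_finiteDimensional
  -- continuous projection onto D along Y
  set P : F →L[ℝ] D := D.linearProjOfClosedCompl Y hcompl hDc hY with hP
  have hPD : ∀ x : D, P (x : F) = x := fun x => Submodule.linearProjOfIsCompl_apply_left hcompl x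
  have hPY : ∀ y ∈ Y, P y = 0 := fun y hy => Submodule.linearProjOfIsCompl_apply_right hcompl ⟨y, hy⟩
  set n := Module.finrank ℝ D with hn
  set b : Module.Basis (Fin n) ℝ D := Module.finBasis ℝ D with hb
  -- continuous coordinate functionals on F
  set φ : Fin n → F →L[ℝ] ℝ := fun i => (LinearMap.toContinuousLinearMap (b.coord i)).comp P with hφ
  -- choose approximations in Finf
  have hc : ∀ i : Fin n, ∃ c ∈ Finf, ‖(b i : F) - c‖ < ((n + 1 : ℝ) * (‖φ i‖ + 1))⁻¹ := by
    intro i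
    have hpos : (0:ℝ) < ((n + 1 : ℝ) * (‖φ i‖ + 1))⁻¹ := by positivity
    obtain ⟨x, hx1, hx2⟩ := Metric.dense_iff.mp hdense (b i : F) _ hpos
    exact ⟨x, hx2, by rw [norm_sub_rev]; simpa [dist_eq_norm] using hx1⟩
  choose c hcF hcnorm using hc
  set T : F →L[ℝ] F := ∑ i, (φ i).smulRight ((b i : F) - c i) with hT
  have hTnorm : ‖T‖ < 1 := by
    calc ‖T‖ ≤ ∑ i, ‖(φ i).smulRight ((b i : F) - c i)‖ := norm_sum_le _ _
    _ ≤ ∑ _i : Fin n, (n + 1 : ℝ)⁻¹ := by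
        apply Finset.sum_le_sum
        intro i _
        rw [ContinuousLinearMap.norm_smulRight_apply]
        have h1 : ‖φ i‖ * ‖(b i : F) - c i‖ ≤ (‖φ i‖ + 1) * ((n + 1 : ℝ) * (‖φ i‖ + 1))⁻¹ :=
          mul_le_mul (by linarith [norm_nonneg (φ i)]) (le_of_lt (hcnorm i)) (norm_nonneg _)
            (by positivity)
        refine h1.trans (le_of_eq ?_)
        field_simp
    _ < 1 := by
        rw [Finset.sum_const, Finset.card_univ, Fintype.card_fin, nsmul_eq_mul,
          ← div_eq_mul_inv, div_lt_one (by positivity)]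
        linarith
  -- the perturbation e = 1 - T is an automorphism
  set u : (F →L[ℝ] F)ˣ := Units.oneSub T hTnorm with hu
  have huval : ∀ x : F, (u.val : F →L[ℝ] F) x = x - T x := fun x => by
    simp [hu, Units.oneSub, ContinuousLinearMap.sub_apply]
  have hcomp1 : ∀ x : F, (u.val : F →L[ℝ] F) ((u.inv : F →L[ℝ] F) x) = x := fun x => by
    have := u.val_inv
    calc (u.val : F →L[ℝ] F) ((u.inv : F →L[ℝ] F) x) = (u.val * u.inv) x := rfl
    _ = x := by rw [this]; rfl
  have hcomp2 : ∀ x : F, (u.inv : F →L[ℝ] F) ((u.val : F →L[ℝ] F) x) = x := fun x => by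
    have := u.inv_val
    calc (u.inv : F →L[ℝ] F) ((u.val : F →L[ℝ] F) x) = (u.inv * u.val) x := rfl
    _ = x := by rw [this]; rfl
  set e : F ≃ₗ[ℝ] F :=
    LinearEquiv.ofLinear (u.val : F →ₗ[ℝ] F) (u.inv : F →ₗ[ℝ] F)
      (LinearMap.ext hcomp1) (LinearMap.ext hcomp2) with he
  have heapp : ∀ x : F, e x = x - T x := fun x => huval x
  -- e fixes Y pointwise
  have hTY : ∀ y ∈ Y, T y = 0 := by
    intro y hy
    rw [hT]
    simp only [ContinuousLinearMap.sum_apply, ContinuousLinearMap.smulRight_apply]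
    have : ∀ i : Fin n, φ i y = 0 := by
      intro i
      simp only [hφ, ContinuousLinearMap.comp_apply, hPY y hy,
        LinearMap.coe_toContinuousLinearMap', map_zero]
    simp [this]
  have heY : ∀ y ∈ Y, e y = y := fun y hy => by rw [heapp, hTY y hy, sub_zero]
  -- the candidate
  refine ⟨D.map (e : F →ₗ[ℝ] F), ?_, ?_, ?_⟩
  · exact Module.Finite.map D (e : F →ₗ[ℝ] F)
  · rintro _ ⟨x, hx, rfl⟩
    -- compute e x for x ∈ D
    set d : D := ⟨x, hx⟩ with hd
    have hxd : x = (d : F) := rfl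
    have hPx : P x = d := hPD d
    have hφd : ∀ i : Fin n, φ i x = b.repr d i := by
      intro i
      simp only [hφ, ContinuousLinearMap.comp_apply, hPx,
        LinearMap.coe_toContinuousLinearMap', Module.Basis.coord_apply]
    have hrepr : x = ∑ i, b.repr d i • (b i : F) := by
      conv_lhs => rw [hxd, ← b.sum_repr d]
      push_cast
      rfl
    have : (e : F →ₗ[ℝ] F) x = ∑ i, b.repr d i • c i := by
      have : e x = x - T x := heapp x
      rw [show ((e : F →ₗ[ℝ] F) x) = e x from rfl, this, hT]
      simp only [ContinuousLinearMap.sum_apply, ContinuousLinearMap.smulRight_apply, hφd]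
      rw [hrepr]
      rw [← Finset.sum_sub_distrib]
      congr 1
      ext i
      rw [smul_sub]
      abel
    rw [this]
    exact Submodule.sum_mem _ fun i _ => Submodule.smul_mem _ _ (hcF i)
  · have hmapY : Y.map (e : F →ₗ[ℝ] F) = Y := by
      apply le_antisymm
      · rintro _ ⟨y, hy, rfl⟩
        rw [show ((e : F →ₗ[ℝ] F) y) = e y from rfl, heY y hy]
        exact hy
      · intro y hy
        exact ⟨y, hy, heY y hy⟩
    have h := hcompl.map (Submodule.orderIsoMapComap e : Submodule ℝ F ≃o Submodule ℝ F)
    rw [Submodule.orderIsoMapComap_apply, Submodule.orderIsoMapComap_apply] at h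
    have h1 : Submodule.map (σ₁₂ := RingHom.id ℝ) e D = D.map (e : F →ₗ[ℝ] F) := rfl
    have h2 : Submodule.map (σ₁₂ := RingHom.id ℝ) e Y = Y.map (e : F →ₗ[ℝ] F) := rfl
    rw [h1, h2, hmapY] at h
    exact h
end

section
/- Let E, F, G be sc-Banach spaces, U ⊆ E and V ⊆ F open, and f : U → F, g : V → G maps of class sc¹ with f(U) ⊆ V. Then g ∘ f : U → G is of class sc¹ and T(g∘f) = Tg ∘ Tf; in particular D(g∘f)(x) = Dg(f(x)) ∘ Df(x) for every x ∈ U₁. -/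
variable {E F G : ℕ → Type*}
  [∀ m, NormedAddCommGroup (E m)] [∀ m, NormedSpace ℝ (E m)]
  [∀ m, NormedAddCommGroup (F m)] [∀ m, NormedSpace ℝ (F m)]
  [∀ m, NormedAddCommGroup (G m)] [∀ m, NormedSpace ℝ (G m)]

/-- The inclusion from level `m + 1` down to level `1`. -/
def down1 (ι : ∀ m, E (m + 1) →L[ℝ] E m) : ∀ m, E (m + 1) →L[ℝ] E 1
  | 0 => ContinuousLinearMap.id ℝ (E 1)
  | m + 1 => (down1 ι m).comp (ι (m + 1))

/-- `f : U → F` is sc⁰ with level maps `fm`: `f` maps `Uₘ` into `Fₘ`, witnessed by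
the continuous lifts `fm m : Uₘ → Fₘ`. -/
def IsSc0With (ιE : ∀ m, E (m + 1) →L[ℝ] E m) (ιF : ∀ m, F (m + 1) →L[ℝ] F m)
    (U : Set (E 0)) (f : E 0 → F 0) (fm : ∀ m, E m → F m) : Prop :=
  ∀ m, ContinuousOn (fm m) {x : E m | down ιE m x ∈ U} ∧
    ∀ x : E m, down ιE m x ∈ U → down ιF m (fm m x) = f (down ιE m x)

/-- `f : U → F` is sc¹ with level maps `fm` and linearization `Df`:
it is sc⁰, for every `x ∈ U₁` the operator `Df x ∈ L(E₀,F₀)` satisfies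
`‖f(x+h) − f(x) − Df(x)h‖₀ / ‖h‖₁ → 0`, and the tangent map
`Tf(x,h) = (f(x), Df(x)h)` is itself sc⁰ (witnessed by the lifts `Dfm`). -/
def IsSc1With (ιE : ∀ m, E (m + 1) →L[ℝ] E m) (ιF : ∀ m, F (m + 1) →L[ℝ] F m)
    (U : Set (E 0)) (f : E 0 → F 0)
    (fm : ∀ m, E m → F m) (Df : E 1 → (E 0 →L[ℝ] F 0)) : Prop :=
  IsSc0With ιE ιF U f fm ∧
  (∀ x : E 1, down ιE 1 x ∈ U →
    ∀ ε > (0 : ℝ), ∃ δ > (0 : ℝ), ∀ h : E 1, ‖h‖ < δ →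
      down ιE 1 (x + h) ∈ U →
      ‖f (down ιE 1 (x + h)) - f (down ιE 1 x) - Df x (down ιE 1 h)‖ ≤ ε * ‖h‖) ∧
  (∀ m, ∃ Dfm : E (m + 1) → E m → F m,
    ContinuousOn (fun p : E (m + 1) × E m => Dfm p.1 p.2)
      {p : E (m + 1) × E m | down ιE (m + 1) p.1 ∈ U} ∧
    ∀ (x : E (m + 1)) (h : E m), down ιE (m + 1) x ∈ U →
      down ιF m (Dfm x h) = Df (down1 ιE m x) (down ιE m h))

/-- Uniform approximation over a compact set of second arguments. -/
lemma key_unif {A B C : Type*} [PseudoMetricSpace A] [PseudoMetricSpace B] [PseudoMetricSpace C]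
    (Φ : A × B → C) (O : Set (A × B)) (hO : IsOpen O) (hΦ : ContinuousOn Φ O)
    (y : A) (K : Set B) (hK : IsCompact K) (hyK : ∀ k ∈ K, (y, k) ∈ O)
    {ε : ℝ} (hε : 0 < ε) :
    ∃ δ > 0, ∀ y', dist y' y < δ → ∀ k ∈ K, dist (Φ (y', k)) (Φ (y, k)) ≤ ε := by
  have hcont : ∀ k ∈ K, ∃ r > 0, ∀ p : A × B, dist p (y, k) < r →
      dist (Φ p) (Φ (y, k)) < ε / 2 := by
    intro k hk
    have h1 : ContinuousAt Φ (y, k) := hΦ.continuousAt (hO.mem_nhds (hyK k hk))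
    obtain ⟨r, hr, hb⟩ := Metric.continuousAt_iff.1 h1 (ε / 2) (by positivity)
    exact ⟨r, hr, fun p hp => hb hp⟩
  choose! r hr hb using hcont
  obtain ⟨t, htK, hcover⟩ := hK.elim_nhds_subcover (fun k => Metric.ball k (r k / 2))
    (fun k hk => Metric.ball_mem_nhds k (by have := hr k hk; positivity))
  rcases t.eq_empty_or_nonempty with ht | ht
  · refine ⟨1, one_pos, fun y' _ k hk => absurd (hcover hk) ?_⟩
    simp [ht]
  · set δ := t.inf' ht (fun k => r k / 2) with hδ
    have hδpos : 0 < δ := by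
      rw [hδ, Finset.lt_inf'_iff]
      intro k hk
      have := hr k (htK k hk); positivity
    refine ⟨δ, hδpos, fun y' hy' k hk => ?_⟩
    obtain ⟨i, hit, hki⟩ := Set.mem_iUnion₂.1 (hcover hk)
    have hδi : δ ≤ r i / 2 := Finset.inf'_le _ hit
    have hri := hr i (htK i hit)
    have hki' : dist k i < r i / 2 := Metric.mem_ball.1 hki
    have h1 : dist (y', k) (y, i) < r i := by
      rw [Prod.dist_eq]
      exact max_lt (by linarith [lt_of_lt_of_le hy' hδi]) (by linarith)
    have h2 : dist ((y, k) : A × B) (y, i) < r i := by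
      rw [Prod.dist_eq]
      simp only [dist_self]
      exact max_lt hri (by linarith)
    calc dist (Φ (y', k)) (Φ (y, k))
        ≤ dist (Φ (y', k)) (Φ (y, i)) + dist (Φ (y, i)) (Φ (y, k)) := dist_triangle _ _ _
      _ ≤ ε / 2 + ε / 2 := by
          have b1 := hb i (htK i hit) _ h1
          have b2 := hb i (htK i hit) _ h2
          rw [dist_comm] at b2
          exact add_le_add b1.le b2.le
      _ = ε := by ring

/-- Local uniform operator-norm bound from joint continuity. -/
lemma key_bound {A : Type*} [PseudoMetricSpace A] {B C : Type*}
    [NormedAddCommGroup B] [NormedSpace ℝ B] [NormedAddCommGroup C] [NormedSpace ℝ C]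
    (T : A → B →L[ℝ] C) (O : Set (A × B)) (hO : IsOpen O)
    (hΦ : ContinuousOn (fun p : A × B => T p.1 p.2) O) (y : A) (hy : (y, (0 : B)) ∈ O) :
    ∃ η > 0, ∃ M > 0, ∀ y', dist y' y < η → ∀ k : B, ‖T y' k‖ ≤ M * ‖k‖ := by
  have hc : ContinuousAt (fun p : A × B => T p.1 p.2) (y, 0) :=
    hΦ.continuousAt (hO.mem_nhds hy)
  obtain ⟨ρ, hρ, hball⟩ := Metric.continuousAt_iff.1 hc 1 one_pos
  refine ⟨ρ / 2, by positivity, 2 / ρ, by positivity, fun y' hy' k => ?_⟩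
  rcases eq_or_ne k 0 with hk | hk
  · simp [hk]
  · have hknorm : (0:ℝ) < ‖k‖ := norm_pos_iff.2 hk
    set k' : B := (ρ / 2) • ‖k‖⁻¹ • k with hk'
    have hk'norm : ‖k'‖ = ρ / 2 := by
      rw [hk', norm_smul, norm_smul, norm_inv, norm_norm, Real.norm_eq_abs,
        abs_of_pos (by positivity)]
      field_simp
    have hd : dist ((y', k') : A × B) (y, 0) < ρ := by
      rw [Prod.dist_eq]
      refine max_lt (by linarith) ?_
      rw [dist_zero_right, hk'norm]; linarith
    have hval : ‖T y' k'‖ < 1 := by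
      have := hball hd
      simpa [dist_eq_norm] using this
    have hkk : k = ((2 / ρ) * ‖k‖) • k' := by
      rw [hk', smul_smul, smul_smul]
      rw [show 2 / ρ * ‖k‖ * (ρ / 2) * ‖k‖⁻¹ = 1 by field_simp, one_smul]
    calc ‖T y' k‖ = |(2 / ρ) * ‖k‖| * ‖T y' k'‖ := by
          conv_lhs => rw [hkk]
          rw [map_smul, norm_smul, Real.norm_eq_abs]
      _ ≤ ((2 / ρ) * ‖k‖) * 1 := by
          rw [abs_of_pos (by positivity)]
          exact mul_le_mul_of_nonneg_left hval.le (by positivity)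
      _ = (2 / ρ) * ‖k‖ := by ring

lemma down_eq_down1 (ι : ∀ m, E (m + 1) →L[ℝ] E m) (m : ℕ) (x : E (m + 1)) :
    down ι (m + 1) x = down ι 1 (down1 ι m x) := by
  induction m with
  | zero => rfl
  | succ m ih => exact ih (ι (m + 1) x)

/- STATEMENT 11 (Chain rule): if f : U → F and g : V → G are sc¹ and
f(U) ⊆ V, then g ∘ f is sc¹ with level maps gm ∘ fm, and
D(g∘f)(x) = Dg(f(x)) ∘ Df(x) for x ∈ U₁ (so that T(g∘f) = Tg ∘ Tf). -/
set_option maxHeartbeats 4000000 in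
theorem stmt11 (ιE : ∀ m, E (m + 1) →L[ℝ] E m) (ιF : ∀ m, F (m + 1) →L[ℝ] F m)
    (ιG : ∀ m, G (m + 1) →L[ℝ] G m)
    (hE : ScStructure ιE) (hF : ScStructure ιF) (hG : ScStructure ιG)
    (U : Set (E 0)) (V : Set (F 0)) (hU : IsOpen U) (hV : IsOpen V)
    (f : E 0 → F 0) (g : F 0 → G 0)
    (fm : ∀ m, E m → F m) (gm : ∀ m, F m → G m)
    (Df : E 1 → (E 0 →L[ℝ] F 0)) (Dg : F 1 → (F 0 →L[ℝ] G 0))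
    (hf : IsSc1With ιE ιF U f fm Df) (hg : IsSc1With ιF ιG V g gm Dg)
    (hfV : Set.MapsTo f U V) :
    IsSc1With ιE ιG U (g ∘ f) (fun m => gm m ∘ fm m)
      (fun x : E 1 => (Dg (fm 1 x)).comp (Df x)) := by
  have hfmV : ∀ m (x : E m), down ιE m x ∈ U → down ιF m (fm m x) ∈ V := by
    intro m x hx
    rw [(hf.1 m).2 x hx]
    exact hfV hx
  refine ⟨fun m => ⟨?_, ?_⟩, ?_, ?_⟩
  · -- sc⁰ continuity
    exact (hg.1 m).1.comp (hf.1 m).1 (fun x hx => hfmV m x hx)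
  · -- sc⁰ compatibility
    intro x hx
    show down ιG m (gm m (fm m x)) = g (f (down ιE m x))
    rw [(hg.1 m).2 _ (hfmV m x hx), (hf.1 m).2 x hx]
  · -- the differentiability estimate
    intro x hx ε hε
    -- the lifted point
    set y : F 1 := fm 1 x with hy
    have hyV : down ιF 1 y ∈ V := hfmV 1 x hx
    clear_value y
    -- the set on which Dg-application is continuous
    set O : Set (F 1 × F 0) := {p | down ιF 1 p.1 ∈ V} with hOdef
    have hOopen : IsOpen O := hV.preimage ((down ιF 1).continuous.comp continuous_fst)
    obtain ⟨Dg0, hDg0c, hDg0compat⟩ := hg.2.2 0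
    have hDg0eq : ∀ p : F 1 × F 0, p ∈ O → Dg0 p.1 p.2 = Dg p.1 p.2 := by
      intro p hp
      have h := hDg0compat p.1 p.2 hp
      simpa [down, down1] using h
    have hΦc : ContinuousOn (fun p : F 1 × F 0 => Dg p.1 p.2) O :=
      hDg0c.congr (fun p hp => (hDg0eq p hp).symm)
    have hyO : ∀ k : F 0, ((y, k) : F 1 × F 0) ∈ O := fun k => by
      simp only [hOdef, Set.mem_setOf_eq]; exact hyV
    clear_value O
    -- Claim B : local operator norm bound
    obtain ⟨η, hη, M, hM, hBnd⟩ := key_bound Dg O hOopen hΦc y (hyO 0)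
    -- the compact set K
    set T : E 1 →L[ℝ] F 0 := (Df x).comp (down ιE 1) with hT
    have hcompT : IsCompactOperator T := by
      have h1 : IsCompactOperator (ιE 0) := hE.2.1 0
      have h2 : IsCompactOperator ((Df x) ∘ (ιE 0)) := h1.continuous_comp (Df x).continuous
      rw [hT]
      exact h2
    set K : Set (F 0) := closure (T '' Metric.closedBall 0 1) with hK
    have hKcpt : IsCompact K := by
      have := IsCompactOperator.isCompact_closure_image_closedBall
        (𝕜₁ := ℝ) (f := (T : E 1 →ₗ[ℝ] F 0)) hcompT 1
      simpa using this
    clear_value K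
    -- Claim A : uniform closeness over K
    obtain ⟨δ₁, hδ₁, hA⟩ := key_unif (fun p : F 1 × F 0 => Dg p.1 p.2) O hOopen hΦc
      y K hKcpt (fun k _ => hyO k) (show (0:ℝ) < ε / 4 by positivity)
    -- ball around f(x) inside V
    obtain ⟨ρ, hρ, hball⟩ := Metric.isOpen_iff.1 hV _ hyV
    -- f's estimate
    obtain ⟨δf, hδf, hfest⟩ := hf.2.1 x hx (ε / (4 * M)) (by positivity)
    -- continuity of fm 1 at x
    have hS1 : IsOpen {z : E 1 | down ιE 1 z ∈ U} := hU.preimage (down ιE 1).continuous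
    have hfm1c : ContinuousAt (fm 1) x := (hf.1 1).1.continuousAt (hS1.mem_nhds hx)
    obtain ⟨Cd, hCdpos, hCdb⟩ : ∃ C : ℝ, 0 < C ∧ ∀ z : F 1, ‖down ιF 1 z‖ ≤ C * ‖z‖ :=
      ⟨‖(down ιF 1 : F 1 →L[ℝ] F 0)‖ + 1, by positivity,
        fun z => le_trans ((down ιF 1).le_opNorm z) (by nlinarith [norm_nonneg z])⟩
    set ε' : ℝ := min δ₁ (min η (ρ / (2 * Cd))) with hε'
    have hε'pos : 0 < ε' := by
      refine lt_min hδ₁ (lt_min hη ?_); positivity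
    obtain ⟨δc, hδc, hfc⟩ := Metric.continuousAt_iff.1 hfm1c ε' hε'pos
    refine ⟨min δc δf, lt_min hδc hδf, fun h hh hxh => ?_⟩
    rcases eq_or_ne h 0 with hh0 | hh0
    · simp [hh0]
    have hhpos : (0:ℝ) < ‖h‖ := norm_pos_iff.2 hh0
    have hhc : ‖h‖ < δc := lt_of_lt_of_le hh (min_le_left _ _)
    have hhf : ‖h‖ < δf := lt_of_lt_of_le hh (min_le_right _ _)
    set a : F 1 := fm 1 (x + h) - fm 1 x with ha
    have hanorm : ‖a‖ < ε' := by
      have := hfc (show dist (x + h) x < δc by simpa [dist_eq_norm] using hhc)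
      simpa [ha, dist_eq_norm] using this
    clear_value a
    have ha1 : ‖a‖ < δ₁ := lt_of_lt_of_le hanorm (min_le_left _ _)
    have haη : ‖a‖ < η := lt_of_lt_of_le hanorm ((min_le_right _ _).trans (min_le_left _ _))
    have haρ : ‖a‖ < ρ / (2 * Cd) :=
      lt_of_lt_of_le hanorm ((min_le_right _ _).trans (min_le_right _ _))
    set a₀ : F 0 := down ιF 1 a with ha₀def
    clear_value a₀
    have hdownle : ‖a₀‖ ≤ Cd * ‖a‖ := by rw [ha₀def]; exact hCdb a
    have ha₀ρ : ‖a₀‖ < ρ / 2 := by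
      have h2 : Cd * ‖a‖ < Cd * (ρ / (2 * Cd)) := by
        exact mul_lt_mul_of_pos_left haρ hCdpos
      have hCdne : Cd ≠ 0 := ne_of_gt hCdpos
      have h3 : Cd * (ρ / (2 * Cd)) = ρ / 2 := by field_simp
      linarith
    -- segment stays inside V
    have hseg : ∀ τ : ℝ, |τ| ≤ 2 → down ιF 1 (y + τ • a) ∈ V := by
      intro τ hτ
      apply hball
      rw [Metric.mem_ball, dist_eq_norm]
      have e : down ιF 1 (y + τ • a) - down ιF 1 y = τ • a₀ := by
        rw [ha₀def, map_add, map_smul]; abel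
      rw [e, norm_smul, Real.norm_eq_abs]
      nlinarith [abs_nonneg τ, norm_nonneg a₀]
    -- compatibility values
    have hfmxh : down ιF 1 (fm 1 (x + h)) = f (down ιE 1 (x + h)) := (hf.1 1).2 _ hxh
    have hfmx : down ιF 1 y = f (down ιE 1 x) := by
      rw [hy]; exact (hf.1 1).2 x hx
    have ha₀eq : a₀ = f (down ιE 1 (x + h)) - f (down ιE 1 x) := by
      rw [ha₀def, ha, map_sub, hfmxh, ← hy, hfmx]
    set w : F 0 := Df x (down ιE 1 h) with hw
    clear_value w
    set r : F 0 := a₀ - w with hrdef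
    clear_value r
    have hr : ‖r‖ ≤ ε / (4 * M) * ‖h‖ := by
      rw [hrdef, ha₀eq, hw]
      exact hfest h hhf hxh
    -- the auxiliary path
    set φ : ℝ → G 0 := fun t => g (down ιF 1 y + t • a₀) - t • (Dg y a₀) with hφ
    clear_value φ
    have hφderiv : ∀ t ∈ Set.Icc (0:ℝ) 1,
        HasDerivAt φ (Dg (y + t • a) a₀ - Dg y a₀) t := by
      intro t ht
      rw [hφ]
      have htabs : |t| ≤ 2 := by
        rw [abs_le]; constructor <;> [linarith [ht.1]; linarith [ht.2]]
      have hmemt : down ιF 1 (y + t • a) ∈ V := hseg t htabs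
      have hψ : HasDerivAt (fun s : ℝ => g (down ιF 1 y + s • a₀)) (Dg (y + t • a) a₀) t := by
        rw [hasDerivAt_iff_isLittleO, Asymptotics.isLittleO_iff]
        intro c hc
        obtain ⟨δ', hδ', hgest⟩ := hg.2.1 (y + t • a) hmemt (c / (‖a‖ + 1)) (by positivity)
        have hevmem : Metric.ball t (min (δ' / (‖a‖ + 1)) 1) ∈ nhds t :=
          Metric.ball_mem_nhds t (by positivity)
        filter_upwards [hevmem] with s hs
        rw [Metric.mem_ball, Real.dist_eq] at hs
        have hst1 : |s - t| < δ' / (‖a‖ + 1) := lt_of_lt_of_le hs (min_le_left _ _)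
        have hst2 : |s - t| < 1 := lt_of_lt_of_le hs (min_le_right _ _)
        have hsabs : |s| ≤ 2 := by
          have := abs_sub_abs_le_abs_sub s t
          have := abs_sub_lt_iff.1 hst2
          rw [abs_le]; constructor <;> [nlinarith [ht.1, ht.2, abs_le.1 htabs]; nlinarith [ht.1, ht.2, abs_le.1 htabs]]
        have hknorm : ‖(s - t) • a‖ < δ' := by
          rw [norm_smul, Real.norm_eq_abs]
          have hna : (0:ℝ) ≤ ‖a‖ := norm_nonneg a
          calc |s - t| * ‖a‖ ≤ |s - t| * (‖a‖ + 1) := by nlinarith [abs_nonneg (s - t)]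
            _ < δ' / (‖a‖ + 1) * (‖a‖ + 1) := by
                exact mul_lt_mul_of_pos_right hst1 (by positivity)
            _ = δ' := by field_simp
        have hmem2 : down ιF 1 ((y + t • a) + (s - t) • a) ∈ V := by
          have e : (y + t • a) + (s - t) • a = y + s • a := by
            rw [add_assoc, ← add_smul]
            congr 2
            ring
          rw [e]
          exact hseg s hsabs
        have hfin : c / (‖a‖ + 1) * (|s - t| * ‖a‖) ≤ c * ‖s - t‖ := by
          rw [Real.norm_eq_abs]
          have hna : (0:ℝ) ≤ ‖a‖ := norm_nonneg a
          have hle : c / (‖a‖ + 1) * ‖a‖ ≤ c := by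
            rw [div_mul_eq_mul_div, div_le_iff₀ (by positivity)]
            nlinarith
          nlinarith [abs_nonneg (s - t)]
        have hk := hgest ((s - t) • a) hknorm hmem2
        have e1 : down ιF 1 ((y + t • a) + (s - t) • a) = down ιF 1 y + s • a₀ := by
          have e : (y + t • a) + (s - t) • a = y + s • a := by
            rw [add_assoc, ← add_smul]; congr 2; ring
          rw [e, map_add, map_smul, ha₀def]
        have e2 : down ιF 1 (y + t • a) = down ιF 1 y + t • a₀ := by
          rw [map_add, map_smul, ha₀def]
        have e3 : down ιF 1 ((s - t) • a) = (s - t) • a₀ := by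
          rw [map_smul, ha₀def]
        rw [e1, e2, e3, map_smul] at hk
        have e4 : ‖(s - t) • a‖ = |s - t| * ‖a‖ := by rw [norm_smul, Real.norm_eq_abs]
        rw [e4] at hk
        exact hk.trans hfin
      have hconst : HasDerivAt (fun s : ℝ => s • (Dg y a₀)) (Dg y a₀) t := by
        simpa using (hasDerivAt_id t).smul_const (Dg y a₀)
      exact hψ.sub hconst
    -- bound on the derivative
    have hbound : ∀ t ∈ Set.Icc (0:ℝ) 1,
        ‖Dg (y + t • a) a₀ - Dg y a₀‖ ≤ 3 * (ε / 4 * ‖h‖) := by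
      intro t ht
      have htnorm : ‖t • a‖ ≤ ‖a‖ := by
        rw [norm_smul, Real.norm_eq_abs, abs_of_nonneg ht.1]
        nlinarith [norm_nonneg a, ht.2]
      have hdist1 : dist (y + t • a) y < δ₁ := by
        rw [dist_eq_norm, add_sub_cancel_left]
        exact lt_of_le_of_lt htnorm ha1
      have hdistη : dist (y + t • a) y < η := by
        rw [dist_eq_norm, add_sub_cancel_left]
        exact lt_of_le_of_lt htnorm haη
      -- split a₀ = w + r
      have hsplit : a₀ = w + r := by rw [hrdef]; abel
      set u : E 1 := ‖h‖⁻¹ • h with hu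
      clear_value u
      have hTu : T u ∈ K := by
        rw [hK]
        apply subset_closure
        refine ⟨u, ?_, rfl⟩
        rw [Metric.mem_closedBall, dist_zero_right, hu, norm_smul, norm_inv, norm_norm]
        rw [inv_mul_cancel₀ (ne_of_gt hhpos)]
      have hwTu : w = ‖h‖ • T u := by
        rw [hw, hT]
        simp only [ContinuousLinearMap.coe_comp', Function.comp_apply, hu, map_smul]
        rw [smul_smul, mul_inv_cancel₀ (ne_of_gt hhpos), one_smul]
      have hterm1 : ‖Dg (y + t • a) w - Dg y w‖ ≤ ε / 4 * ‖h‖ := by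
        have hAapp := hA (y + t • a) hdist1 (T u) hTu
        rw [dist_eq_norm] at hAapp
        have e : Dg (y + t • a) w - Dg y w = ‖h‖ • (Dg (y + t • a) (T u) - Dg y (T u)) := by
          rw [hwTu, map_smul, map_smul, smul_sub]
        rw [e, norm_smul, Real.norm_eq_abs, abs_of_pos hhpos]
        calc ‖h‖ * ‖Dg (y + t • a) (T u) - Dg y (T u)‖ ≤ ‖h‖ * (ε / 4) := by
              exact mul_le_mul_of_nonneg_left hAapp (le_of_lt hhpos)
          _ = ε / 4 * ‖h‖ := by ring
      have hMr : M * ‖r‖ ≤ ε / 4 * ‖h‖ := by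
        calc M * ‖r‖ ≤ M * (ε / (4 * M) * ‖h‖) := by
              exact mul_le_mul_of_nonneg_left hr (le_of_lt hM)
          _ = ε / 4 * ‖h‖ := by field_simp
      have hterm2 : ‖Dg (y + t • a) r‖ ≤ ε / 4 * ‖h‖ :=
        le_trans (hBnd (y + t • a) hdistη r) hMr
      have hterm3 : ‖Dg y r‖ ≤ ε / 4 * ‖h‖ := by
        refine le_trans (hBnd y ?_ r) hMr
        rw [dist_self]; exact hη
      have e : Dg (y + t • a) a₀ - Dg y a₀
          = (Dg (y + t • a) w - Dg y w) + (Dg (y + t • a) r - Dg y r) := by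
        rw [hsplit, map_add, map_add]
        abel
      rw [e]
      calc ‖(Dg (y + t • a) w - Dg y w) + (Dg (y + t • a) r - Dg y r)‖
          ≤ ‖Dg (y + t • a) w - Dg y w‖ + (‖Dg (y + t • a) r‖ + ‖Dg y r‖) := by
            refine le_trans (norm_add_le _ _) ?_
            exact add_le_add (le_refl _) (norm_sub_le _ _)
        _ ≤ ε / 4 * ‖h‖ + (ε / 4 * ‖h‖ + ε / 4 * ‖h‖) := by
            exact add_le_add hterm1 (add_le_add hterm2 hterm3)
        _ = 3 * (ε / 4 * ‖h‖) := by ring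
    -- mean value inequality
    have hmvt := norm_image_sub_le_of_norm_deriv_le_segment'
      (f := φ) (f' := fun t => Dg (y + t • a) a₀ - Dg y a₀)
      (fun t ht => (hφderiv t ht).hasDerivWithinAt)
      (fun t ht => hbound t (Set.Ico_subset_Icc_self ht))
      1 (Set.right_mem_Icc.2 zero_le_one)
    -- assemble
    have hfval : f (down ιE 1 (x + h)) = down ιF 1 y + a₀ := by
      rw [ha₀eq, hfmx]; abel
    have hgy : (g ∘ f) (down ιE 1 x) = g (down ιF 1 y) := by
      simp only [Function.comp_apply, hfmx]
    have hgoalrw : (g ∘ f) (down ιE 1 (x + h)) - (g ∘ f) (down ιE 1 x)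
        - ((Dg (fm 1 x)).comp (Df x)) (down ιE 1 h) = (φ 1 - φ 0) + Dg y r := by
      simp only [Function.comp_apply, hfval, ← hfmx, hφ, ContinuousLinearMap.coe_comp']
      rw [hrdef, map_sub]
      simp only [one_smul, zero_smul, add_zero, sub_zero, ← hy, ← hw]
      abel
    rw [hgoalrw]
    have h1 : ‖φ 1 - φ 0‖ ≤ 3 * (ε / 4 * ‖h‖) := by
      have := hmvt
      simpa using this
    have h2 : ‖Dg y r‖ ≤ ε / 4 * ‖h‖ := by
      refine le_trans (hBnd y (by rw [dist_self]; exact hη) r) ?_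
      calc M * ‖r‖ ≤ M * (ε / (4 * M) * ‖h‖) := mul_le_mul_of_nonneg_left hr (le_of_lt hM)
        _ = ε / 4 * ‖h‖ := by field_simp
    calc ‖(φ 1 - φ 0) + Dg y r‖ ≤ ‖φ 1 - φ 0‖ + ‖Dg y r‖ := norm_add_le _ _
      _ ≤ 3 * (ε / 4 * ‖h‖) + ε / 4 * ‖h‖ := add_le_add h1 h2
      _ = ε * ‖h‖ := by ring
  · -- the tangent map is sc⁰
    intro m
    obtain ⟨Dfm, hDfc, hDfcompat⟩ := hf.2.2 m
    obtain ⟨Dgm, hDgc, hDgcompat⟩ := hg.2.2 m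
    have hfmV : ∀ m (x : E m), down ιE m x ∈ U → down ιF m (fm m x) ∈ V := by
      intro m x hx
      rw [(hf.1 m).2 x hx]
      exact hfV hx
    refine ⟨fun x h => Dgm (fm (m + 1) x) (Dfm x h), ?_, ?_⟩
    · have hinner : ContinuousOn (fun p : E (m + 1) × E m => (fm (m + 1) p.1, Dfm p.1 p.2))
          {p : E (m + 1) × E m | down ιE (m + 1) p.1 ∈ U} := by
        refine ContinuousOn.prodMk ?_ hDfc
        exact (hf.1 (m + 1)).1.comp continuousOn_fst (fun p hp => hp)
      refine hDgc.comp hinner (fun p hp => ?_)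
      exact hfmV (m + 1) p.1 hp
    · intro x h hx
      have hfx : down ιF (m + 1) (fm (m + 1) x) ∈ V := hfmV (m + 1) x hx
      rw [hDgcompat _ _ hfx, hDfcompat x h hx]
      have hkey : down1 ιF m (fm (m + 1) x) = fm 1 (down1 ιE m x) := by
        have hUm : down ιE 1 (down1 ιE m x) ∈ U := by
          rw [← down_eq_down1]; exact hx
        apply hF.1 0
        show down ιF 1 (down1 ιF m (fm (m + 1) x)) = down ιF 1 (fm 1 (down1 ιE m x))
        rw [← down_eq_down1, (hf.1 (m + 1)).2 x hx, (hf.1 1).2 _ hUm, ← down_eq_down1]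
      rw [hkey]
      rfl
end

section
/- Let Φ : U → U′ be a diffeomorphism between relatively open neighborhoods U, U′ of points (r,a) and (r′,a′) in partial quadrants [0,∞)ᵏ ⊕ Q and [0,∞)^{k'} ⊕ Q′ of Banach spaces, with Φ(r,a) = (r′,a′), such that the derivative DΦ(r,a) is a linear isomorphism. Then the number of vanishing coordinates of r ∈ [0,∞)ᵏ equals the number of vanishing coordinates of r′ ∈ [0,∞)^{k'}. (Finite-dimensional/Banach version of corner recognition: diffeomorphisms of quadrants preserve the degeneracy index.) -/
open Filter Set Asymptotics Topology

namespace Stmt16Aux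

variable {E F : Type*} [NormedAddCommGroup E] [NormedSpace ℝ E]
  [NormedAddCommGroup F] [NormedSpace ℝ F]

/-- The positive tangent cone (with positive scaling factors). -/
def pcone (s : Set E) (x : E) : Set E :=
  {y | ∃ (c : ℕ → ℝ) (d : ℕ → E), (∀ᶠ n in atTop, x + d n ∈ s) ∧
    Tendsto c atTop atTop ∧ Tendsto (fun n => c n • d n) atTop (𝓝 y)}

theorem pcone_maps {f : E → F} {f' : E →L[ℝ] F} {s : Set E} {x : E} {t : Set F}
    (hf : HasFDerivWithinAt f f' s x) (hst : Set.MapsTo f s t) {y : E} (hy : y ∈ pcone s x) :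
    f' y ∈ pcone t (f x) := by
  obtain ⟨c, d, hd, hc, hcd⟩ := hy
  have hcnorm : Tendsto (fun n => ‖c n‖) atTop atTop := by
    simpa [Real.norm_eq_abs, Function.comp_def] using (tendsto_abs_atTop_atTop.comp hc)
  have hd0 : Tendsto d atTop (𝓝 0) := tangentConeAt.lim_zero atTop hcnorm hcd
  have hx : Tendsto (fun n => x + d n) atTop (𝓝[s] x) := by
    rw [tendsto_nhdsWithin_iff]
    exact ⟨by simpa using tendsto_const_nhds.add hd0, hd⟩
  have herr : (fun n => f (x + d n) - f x - f' (x + d n - x)) =o[atTop]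
      (fun n => x + d n - x) := hf.isLittleO.comp_tendsto hx
  have herr' : (fun n => f (x + d n) - f x - f' (d n)) =o[atTop] d := by
    simpa using herr
  have hsmul : (fun n => c n • (f (x + d n) - f x - f' (d n))) =o[atTop]
      (fun n => c n • d n) := by
    rw [isLittleO_iff] at herr' ⊢
    intro ε hε
    filter_upwards [herr' hε] with n hn
    rw [norm_smul, norm_smul]
    calc ‖c n‖ * ‖f (x + d n) - f x - f' (d n)‖ ≤ ‖c n‖ * (ε * ‖d n‖) :=
          mul_le_mul_of_nonneg_left hn (norm_nonneg _)
      _ = ε * (‖c n‖ * ‖d n‖) := by ring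
  have hzero : Tendsto (fun n => c n • (f (x + d n) - f x - f' (d n))) atTop (𝓝 0) :=
    (isLittleO_one_iff ℝ).1 (hsmul.trans_isBigO (hcd.isBigO_one ℝ))
  have hlin : Tendsto (fun n => f' (c n • d n)) atTop (𝓝 (f' y)) :=
    ((f'.continuous.tendsto y).comp hcd)
  have hmain : Tendsto (fun n => c n • (f (x + d n) - f x)) atTop (𝓝 (f' y)) := by
    have h := hzero.add hlin
    rw [zero_add] at h
    refine h.congr fun n => ?_
    rw [map_smul]
    rw [smul_sub, smul_sub]
    abel
  refine ⟨c, fun n => f (x + d n) - f x, ?_, hc, hmain⟩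
  filter_upwards [hd] with n hn
  simpa using hst hn

theorem mem_pcone_quadrant {Q : Type*} [NormedAddCommGroup Q] [NormedSpace ℝ Q] {k : ℕ}
    {O : Set ((Fin k → ℝ) × Q)} (hO : IsOpen O) {r : Fin k → ℝ} {a : Q}
    (hmem : (r, a) ∈ O) (hq : ∀ i, 0 ≤ r i)
    {v : (Fin k → ℝ) × Q} (hv : ∀ i, r i = 0 → 0 ≤ v.1 i) :
    v ∈ pcone (O ∩ {p : (Fin k → ℝ) × Q | ∀ i, 0 ≤ p.1 i}) (r, a) := by
  have hpos : ∀ n : ℕ, (0 : ℝ) < (n : ℝ) + 1 := fun n => by positivity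
  have hd0 : Tendsto (fun n : ℕ => ((n : ℝ) + 1)⁻¹ • v) atTop (𝓝 0) := by
    have h1 : Tendsto (fun n : ℕ => ((n : ℝ) + 1)⁻¹) atTop (𝓝 0) :=
      tendsto_inv_atTop_zero.comp (tendsto_atTop_add_const_right _ 1 tendsto_natCast_atTop_atTop)
    simpa using h1.smul_const v
  refine ⟨fun n => (n : ℝ) + 1, fun n => ((n : ℝ) + 1)⁻¹ • v, ?_, ?_, ?_⟩
  · have htend : Tendsto (fun n : ℕ => (r, a) + ((n : ℝ) + 1)⁻¹ • v) atTop (𝓝 (r, a)) := by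
      simpa using tendsto_const_nhds.add hd0
    have hOev : ∀ᶠ n : ℕ in atTop, (r, a) + ((n : ℝ) + 1)⁻¹ • v ∈ O :=
      htend.eventually (hO.eventually_mem hmem)
    have hquad : ∀ᶠ n : ℕ in atTop, ∀ i, 0 ≤ ((r, a) + ((n : ℝ) + 1)⁻¹ • v).1 i := by
      rw [eventually_all]
      intro i
      rcases eq_or_lt_of_le (hq i) with hri | hri
      · filter_upwards with n
        have : ((r, a) + ((n : ℝ) + 1)⁻¹ • v).1 i = r i + ((n : ℝ) + 1)⁻¹ * v.1 i := rfl
        rw [this, ← hri, zero_add]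
        have hvi := hv i hri.symm
        positivity
      · have htend' : Tendsto (fun n : ℕ => ((r, a) + ((n : ℝ) + 1)⁻¹ • v).1 i)
            atTop (𝓝 (r i)) := by
          have : Tendsto (fun p : (Fin k → ℝ) × Q => p.1 i) (𝓝 (r, a)) (𝓝 (r i)) :=
            ((continuous_apply i).comp continuous_fst).tendsto (r, a)
          exact this.comp htend
        filter_upwards [htend'.eventually (eventually_gt_nhds hri)] with n hn
        exact hn.le
    filter_upwards [hOev, hquad] with n h1 h2 using ⟨h1, h2⟩
  · exact tendsto_atTop_add_const_right _ 1 tendsto_natCast_atTop_atTop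
  · refine Tendsto.congr (fun n => ?_) (tendsto_const_nhds (x := v))
    rw [smul_smul, mul_inv_cancel₀ (hpos n).ne', one_smul]

theorem pcone_coord {Q : Type*} [NormedAddCommGroup Q] [NormedSpace ℝ Q] {k : ℕ}
    {s : Set ((Fin k → ℝ) × Q)} (hs : ∀ p ∈ s, ∀ i, 0 ≤ p.1 i)
    {r : Fin k → ℝ} {a : Q} {j : Fin k} (hj : r j = 0)
    {v : (Fin k → ℝ) × Q} (hv : v ∈ pcone s (r, a)) : 0 ≤ v.1 j := by
  obtain ⟨c, d, hd, hc, hcd⟩ := hv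
  have hlim : Tendsto (fun n => (c n • d n).1 j) atTop (𝓝 (v.1 j)) :=
    (((continuous_apply j).comp continuous_fst).tendsto v).comp hcd
  refine ge_of_tendsto hlim ?_
  filter_upwards [hd, hc.eventually_gt_atTop 0] with n hn hcn
  have h1 : 0 ≤ (d n).1 j := by
    have h := hs _ hn j
    have : ((r, a) + d n).1 j = r j + (d n).1 j := rfl
    rw [this, hj, zero_add] at h
    exact h
  have h2 : (c n • d n).1 j = c n * (d n).1 j := rfl
  rw [h2]
  exact mul_nonneg hcn.le h1

/-- The lineality space of the quadrant cone at `r`. -/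
def zmod (Q : Type*) [AddCommGroup Q] [Module ℝ Q] {k : ℕ} (r : Fin k → ℝ) :
    Submodule ℝ ((Fin k → ℝ) × Q) where
  carrier := {v | ∀ i, r i = 0 → v.1 i = 0}
  add_mem' := by
    intro v w hv hw i hi
    have : (v + w).1 i = v.1 i + w.1 i := rfl
    rw [this, hv i hi, hw i hi, add_zero]
  zero_mem' := fun i _ => rfl
  smul_mem' := by
    intro c v hv i hi
    have : (c • v).1 i = c * v.1 i := rfl
    rw [this, hv i hi, mul_zero]

theorem mem_zmod {Q : Type*} [AddCommGroup Q] [Module ℝ Q] {k : ℕ} {r : Fin k → ℝ}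
    {v : (Fin k → ℝ) × Q} : v ∈ zmod Q r ↔ ∀ i, r i = 0 → v.1 i = 0 := Iff.rfl

/-- Projection to the vanishing coordinates. -/
def zproj (Q : Type*) [AddCommGroup Q] [Module ℝ Q] {k : ℕ} (r : Fin k → ℝ) :
    ((Fin k → ℝ) × Q) →ₗ[ℝ] ({i : Fin k | r i = 0} → ℝ) where
  toFun v := fun i => v.1 i
  map_add' v w := rfl
  map_smul' c v := rfl

theorem ker_zproj (Q : Type*) [AddCommGroup Q] [Module ℝ Q] {k : ℕ} (r : Fin k → ℝ) :
    LinearMap.ker (zproj Q r) = zmod Q r := by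
  ext v
  simp only [LinearMap.mem_ker, zproj, LinearMap.coe_mk, AddHom.coe_mk, mem_zmod,
    funext_iff, Subtype.forall]
  rfl

theorem surj_zproj (Q : Type*) [AddCommGroup Q] [Module ℝ Q] {k : ℕ} (r : Fin k → ℝ) :
    Function.Surjective (zproj Q r) := by
  classical
  intro g
  refine ⟨(fun i => if h : r i = 0 then g ⟨i, h⟩ else 0, 0), ?_⟩
  funext i
  simp only [zproj, LinearMap.coe_mk, AddHom.coe_mk]
  exact dif_pos i.2

/-- The quotient by the lineality space is the space of vanishing coordinates. -/
noncomputable def quotEquiv (Q : Type*) [AddCommGroup Q] [Module ℝ Q] {k : ℕ} (r : Fin k → ℝ) :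
    (((Fin k → ℝ) × Q) ⧸ (zmod Q r)) ≃ₗ[ℝ] ({i : Fin k | r i = 0} → ℝ) :=
  (Submodule.quotEquivOfEq _ _ (ker_zproj Q r).symm).trans
    ((zproj Q r).quotKerEquivOfSurjective (surj_zproj Q r))

end Stmt16Aux

open Stmt16Aux

/- STATEMENT 16: a diffeomorphism between relatively open subsets of the
partial quadrants [0,∞)ᵏ ⊕ Q and [0,∞)^{k'} ⊕ Q' preserves the number of
vanishing quadrant coordinates (the degeneracy index). -/
theorem stmt16 {Q Q' : Type*} [NormedAddCommGroup Q] [NormedSpace ℝ Q]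
    [NormedAddCommGroup Q'] [NormedSpace ℝ Q'] {k k' : ℕ}
    (U : Set ((Fin k → ℝ) × Q)) (U' : Set ((Fin k' → ℝ) × Q'))
    (hU : ∃ O, IsOpen O ∧ U = O ∩ {p : (Fin k → ℝ) × Q | ∀ i, 0 ≤ p.1 i})
    (hU' : ∃ O', IsOpen O' ∧ U' = O' ∩ {p : (Fin k' → ℝ) × Q' | ∀ j, 0 ≤ p.1 j})
    (Φ : (Fin k → ℝ) × Q → (Fin k' → ℝ) × Q')
    (Ψ : (Fin k' → ℝ) × Q' → (Fin k → ℝ) × Q)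
    (hΦU : Set.MapsTo Φ U U') (hΨU' : Set.MapsTo Ψ U' U)
    (hΦcont : ContinuousOn Φ U) (hΨcont : ContinuousOn Ψ U')
    (hinv₁ : ∀ p ∈ U, Ψ (Φ p) = p) (hinv₂ : ∀ p ∈ U', Φ (Ψ p) = p)
    (r : Fin k → ℝ) (a : Q) (r' : Fin k' → ℝ) (a' : Q')
    (hra : (r, a) ∈ U) (hΦra : Φ (r, a) = (r', a'))
    (L : ((Fin k → ℝ) × Q) ≃L[ℝ] ((Fin k' → ℝ) × Q'))
    (hDΦ : HasFDerivWithinAt Φ (L : ((Fin k → ℝ) × Q) →L[ℝ] ((Fin k' → ℝ) × Q')) U (r, a))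
    (hDΨ : HasFDerivWithinAt Ψ
      (L.symm : ((Fin k' → ℝ) × Q') →L[ℝ] ((Fin k → ℝ) × Q)) U' (r', a')) :
    {i : Fin k | r i = 0}.ncard = {j : Fin k' | r' j = 0}.ncard := by
  classical
  obtain ⟨O, hO, rfl⟩ := hU
  obtain ⟨O', hO', rfl⟩ := hU'
  set U : Set ((Fin k → ℝ) × Q) := O ∩ {p | ∀ i, 0 ≤ p.1 i} with hUdef
  set U' : Set ((Fin k' → ℝ) × Q') := O' ∩ {p | ∀ j, 0 ≤ p.1 j} with hU'def
  have hra' : (r', a') ∈ U' := by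
    have := hΦU hra
    rwa [hΦra] at this
  have hΨra' : Ψ (r', a') = (r, a) := by
    rw [← hΦra, hinv₁ _ hra]
  -- Step A : L maps the cone into the cone
  have key₁ : ∀ v : (Fin k → ℝ) × Q, (∀ i, r i = 0 → 0 ≤ v.1 i) →
      ∀ j, r' j = 0 → 0 ≤ (L v).1 j := by
    intro v hv j hj
    have h1 : v ∈ pcone U (r, a) :=
      mem_pcone_quadrant hO hra.1 hra.2 hv
    have h2 : (L : ((Fin k → ℝ) × Q) →L[ℝ] _) v ∈ pcone U' (Φ (r, a)) :=
      pcone_maps hDΦ hΦU h1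
    rw [hΦra] at h2
    exact pcone_coord (fun p hp => hp.2) hj h2
  have key₂ : ∀ w : (Fin k' → ℝ) × Q', (∀ j, r' j = 0 → 0 ≤ w.1 j) →
      ∀ i, r i = 0 → 0 ≤ (L.symm w).1 i := by
    intro w hw i hi
    have h1 : w ∈ pcone U' (r', a') :=
      mem_pcone_quadrant hO' hra'.1 hra'.2 hw
    have h2 : (L.symm : ((Fin k' → ℝ) × Q') →L[ℝ] _) w ∈ pcone U (Ψ (r', a')) :=
      pcone_maps hDΨ hΨU' h1
    rw [hΨra'] at h2
    exact pcone_coord (fun p hp => hp.2) hi h2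
  -- L maps the lineality space onto the lineality space
  have hforward : ∀ v ∈ zmod Q r, L v ∈ zmod Q' r' := by
    intro v hv j hj
    have h1 := key₁ v (fun i hi => (hv i hi).ge) j hj
    have h2 := key₁ (-v) (fun i hi => by
      have : (-v).1 i = -(v.1 i) := rfl
      rw [this, hv i hi, neg_zero]) j hj
    have h3 : (L (-v)).1 j = -((L v).1 j) := by
      rw [map_neg]
      rfl
    rw [h3] at h2
    linarith
  have hbackward : ∀ w ∈ zmod Q' r', L.symm w ∈ zmod Q r := by
    intro w hw i hi
    have h1 := key₂ w (fun j hj => (hw j hj).ge) i hi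
    have h2 := key₂ (-w) (fun j hj => by
      have : (-w).1 j = -(w.1 j) := rfl
      rw [this, hw j hj, neg_zero]) i hi
    have h3 : (L.symm (-w)).1 i = -((L.symm w).1 i) := by
      rw [map_neg]
      rfl
    rw [h3] at h2
    linarith
  have hmap : (zmod Q r).map (L.toLinearEquiv : ((Fin k → ℝ) × Q) →ₗ[ℝ] _) = zmod Q' r' := by
    ext w
    simp only [Submodule.mem_map]
    constructor
    · rintro ⟨v, hv, rfl⟩
      exact hforward v hv
    · intro hw
      exact ⟨L.symm w, hbackward w hw, by simp⟩
  -- conclude via finrank of the quotients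
  have e : ({i : Fin k | r i = 0} → ℝ) ≃ₗ[ℝ] ({j : Fin k' | r' j = 0} → ℝ) :=
    (quotEquiv Q r).symm.trans
      ((Submodule.Quotient.equiv (zmod Q r) (zmod Q' r') L.toLinearEquiv hmap).trans
        (quotEquiv Q' r'))
  haveI : Fintype ({i : Fin k | r i = 0} : Set (Fin k)) := Fintype.ofFinite _
  haveI : Fintype ({j : Fin k' | r' j = 0} : Set (Fin k')) := Fintype.ofFinite _
  have hfin := e.finrank_eq
  rw [Module.finrank_pi ℝ, Module.finrank_pi ℝ] at hfin
  rw [Set.ncard_eq_toFinset_card', Set.ncard_eq_toFinset_card',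
    Set.toFinset_card, Set.toFinset_card]
  exact hfin
end
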